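/- Let λ > 1 and α ≥ 0. If 2α ≤ 1 and β(λ-1) ≤ 1, then the system of equations λ e^{-y(1+αy)} - 1 = y/(β(1 - e^{-y(1+αy)})) has no solution with y > 0, i.e., the predator-prey system has no interior steady state. -/

import Mathlib

theorem no_interior_steady_state (lam α β : ℝ) (hlam : 1 < lam) (hα : 0 ≤ α)
    (hα2 : 2 * α ≤ 1) (hβ : 0 < β) (hR : β * (lam - 1) ≤ 1) :
    ¬ ∃ y : ℝ, 0 < y ∧
      lam * Real.exp (-(y * (1 + α * y))) - 1 =
        y / (β * (1 - Real.exp (-(y * (1 + α * y))))) := by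
  rintro ⟨y, hy, heq⟩
  set g : ℝ := y * (1 + α * y) with hg
  set E : ℝ := Real.exp (-g) with hE
  have hypos : 0 < 1 + α * y := by nlinarith
  have hgpos : 0 < g := mul_pos hy hypos
  have hEpos : 0 < E := Real.exp_pos _
  have hE1 : E < 1 := by
    rw [hE, Real.exp_lt_one_iff]; linarith
  have hden : β * (1 - E) ≠ 0 := ne_of_gt (mul_pos hβ (by linarith))
  have hyeq : y = (lam * E - 1) * (β * (1 - E)) := by
    field_simp at heq
    rw [eq_div_iff (by linarith)] at heq
    linarith [heq]
  have h1 : 1 - E ≤ g := by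
    have := Real.add_one_le_exp (-g)
    have hEe : E * Real.exp g = 1 := by
      rw [hE, ← Real.exp_add]; simp
    nlinarith [Real.exp_pos g]
  have h2 : 1 + α * y < Real.exp g := by
    have := Real.add_one_lt_exp (x := g) (by linarith)
    nlinarith
  have hEe : E * Real.exp g = 1 := by
    rw [hE, ← Real.exp_add]; simp
  have h3 : E * (1 + α * y) < 1 := by
    calc E * (1 + α * y) < E * Real.exp g := by
          exact (mul_lt_mul_iff_right₀ hEpos).2 h2
      _ = 1 := hEe
  -- y = (λE−1)β(1−E) ≤ (λ−1)E β (1−E) ≤ E(1−E) ≤ E g = y E(1+αy) < y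
  have h4 : lam * E - 1 ≤ (lam - 1) * E := by nlinarith
  have h5 : y ≤ E * g := by
    have hb : (lam - 1) * E * β ≤ E := by nlinarith
    nlinarith [mul_le_mul_of_nonneg_right h4 (by nlinarith : (0:ℝ) ≤ β * (1 - E)),
      mul_le_mul_of_nonneg_right hb (by linarith : (0:ℝ) ≤ 1 - E),
      mul_le_mul_of_nonneg_left h1 hEpos.le]
  have h6 : E * g < y := by
    have : E * g = y * (E * (1 + α * y)) := by ring
    nlinarith
  linarith
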